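/- arXiv:1204.1303 — 5 statements merged into one kernel-verified Lean document; each statement's English description precedes it below -/
import Mathlib

section
/- For every x > 0, lim_{θ → 0⁺} [1 - C(θ·e^{-αH(x)})/C(θ)] = 1 - e^{-cαH(x)}, where c = min{n ∈ ℕ : a_n > 0}. That is, the extended Weibull distribution with parameter cα is the limiting case of the EWPS class as θ → 0⁺. -/
open Real Set Filter Topology

set_option maxHeartbeats 1000000 in
/-- The extended Weibull distribution with parameter `c·α`, where
`c = min {n : a n > 0}`, is the limiting case of the EWPS class as `θ → 0⁺`:
for every `x > 0`, `1 - C(θ e^{-αH(x)})/C(θ) → 1 - e^{-cαH(x)}`. -/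
theorem ewps_limit_theta_to_zero (H : ℝ → ℝ) (a : ℕ → ℝ) (α : ℝ) (hα : 0 < α)
    (hH : ∀ x ∈ Ioi (0:ℝ), 0 ≤ H x)
    (ha : ∀ n, 0 ≤ a n) (ha0 : a 0 = 0) (hex : ∃ n, 0 < a n)
    (r : ℝ) (hr : 0 < r)
    (hsum : ∀ t : ℝ, |t| < r → Summable (fun n : ℕ => a n * t ^ n))
    (x : ℝ) (hx : 0 < x) :
    Tendsto
      (fun θ : ℝ =>
        1 - (∑' n : ℕ, a n * (θ * exp (-α * H x)) ^ n) / (∑' n : ℕ, a n * θ ^ n))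
      (𝓝[>] 0)
      (𝓝 (1 - exp (-((sInf {n : ℕ | 0 < a n} : ℕ) * α * H x)))) := by
  set c := sInf {n : ℕ | 0 < a n} with hcdef
  have hac : 0 < a c := Nat.sInf_mem (hex : {n : ℕ | 0 < a n}.Nonempty)
  have hlt : ∀ n < c, a n = 0 := fun n hn =>
    le_antisymm (not_lt.1 (Nat.notMem_of_lt_sInf hn)) (ha n)
  set s := exp (-α * H x) with hsdef
  have hs : 0 < s := exp_pos _
  have hs1 : s ≤ 1 := by
    rw [hsdef, exp_le_one_iff]
    have := hH x hx
    nlinarith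
  -- shifted summability
  have hsum' : ∀ (k : ℕ) (t : ℝ), 0 < t → t < r →
      Summable (fun n : ℕ => a (n + k) * t ^ n) := by
    intro k t ht htr
    have h1 : Summable (fun n : ℕ => a (n + k) * t ^ (n + k)) :=
      (summable_nat_add_iff k).2 (hsum t (by rwa [abs_of_pos ht]))
    refine (h1.mul_right ((t ^ k)⁻¹)).congr fun n => ?_
    have htk : (t : ℝ) ^ k ≠ 0 := pow_ne_zero _ ht.ne'
    field_simp [pow_add]
    ring
  obtain ⟨g, hg⟩ : ∃ g : ℝ → ℝ, ∀ t, g t = ∑' n : ℕ, a (n + c) * t ^ n :=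
    ⟨_, fun _ => rfl⟩
  -- factorization
  have hfac : ∀ t : ℝ, 0 < t → t < r → (∑' n : ℕ, a n * t ^ n) = t ^ c * g t := by
    intro t ht htr
    have hs0 := hsum t (by rwa [abs_of_pos ht])
    rw [← Summable.sum_add_tsum_nat_add c hs0]
    have hz : ∑ i ∈ Finset.range c, a i * t ^ i = 0 :=
      Finset.sum_eq_zero fun i hi => by rw [hlt i (Finset.mem_range.1 hi), zero_mul]
    rw [hz, zero_add, hg t, ← tsum_mul_left]
    congr 1; funext n; rw [pow_add]; ring
  -- positivity of g
  have hgpos : ∀ t : ℝ, 0 < t → t < r → 0 < g t := by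
    intro t ht htr
    rw [hg t]
    refine lt_of_lt_of_le hac ?_
    have := Summable.le_tsum (hsum' c t ht htr) 0
      (fun n _ => mul_nonneg (ha _) (pow_nonneg ht.le n))
    simpa using this
  -- g tends to a c
  have hgt : Tendsto g (𝓝[>] (0:ℝ)) (𝓝 (a c)) := by
    obtain ⟨M, hM⟩ : ∃ M : ℝ, M = ∑' n : ℕ, a (n + (c + 1)) * (r / 2) ^ n := ⟨_, rfl⟩
    have hr2 : (0:ℝ) < r / 2 := half_pos hr
    have hr2r : r / 2 < r := by linarith
    have hbound : ∀ t : ℝ, 0 < t → t < r / 2 → ‖g t - a c‖ ≤ M * t := by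
      intro t ht htr2
      have htr : t < r := lt_trans htr2 hr2r
      have hsg := hsum' c t ht htr
      have hshift : g t = a c + t * ∑' n : ℕ, a (n + (c + 1)) * t ^ n := by
        rw [hg t, ← Summable.sum_add_tsum_nat_add 1 hsg]
        rw [← tsum_mul_left]
        simp only [Finset.range_one, Finset.sum_singleton, Nat.zero_add, pow_zero, mul_one]
        congr 1
        refine tsum_congr (f := fun i : ℕ => a (i + 1 + c) * t ^ (i + 1))
          (g := fun n : ℕ => t * (a (n + (c + 1)) * t ^ n)) fun n => ?_
        show a (n + 1 + c) * t ^ (n + 1) = t * (a (n + (c + 1)) * t ^ n)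
        have hnc : n + 1 + c = n + (c + 1) := by ring
        rw [hnc]; ring
      have hht : Summable (fun n : ℕ => a (n + (c + 1)) * t ^ n) := hsum' (c + 1) t ht htr
      have hhM : Summable (fun n : ℕ => a (n + (c + 1)) * (r / 2) ^ n) := hsum' (c + 1) (r / 2) hr2 hr2r
      have hle : (∑' n : ℕ, a (n + (c + 1)) * t ^ n) ≤ M := by
        rw [hM]
        refine Summable.tsum_le_tsum (fun n => ?_) hht hhM
        exact mul_le_mul_of_nonneg_left (pow_le_pow_left₀ ht.le htr2.le n) (ha _)
      have hnn : 0 ≤ ∑' n : ℕ, a (n + (c + 1)) * t ^ n :=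
        tsum_nonneg fun n => mul_nonneg (ha _) (pow_nonneg ht.le n)
      rw [hshift]
      rw [add_sub_cancel_left]
      rw [Real.norm_eq_abs, abs_of_nonneg (mul_nonneg ht.le hnn)]
      calc t * ∑' n : ℕ, a (n + (c + 1)) * t ^ n ≤ t * M :=
            mul_le_mul_of_nonneg_left hle ht.le
        _ = M * t := mul_comm _ _
    have key : Tendsto (fun t => g t - a c) (𝓝[>] (0:ℝ)) (𝓝 0) := by
      refine squeeze_zero_norm' (a := fun t : ℝ => M * t) ?_ ?_
      · have hmem : Ioo (0:ℝ) (r / 2) ∈ 𝓝[>] (0:ℝ) :=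
          Ioo_mem_nhdsGT_of_mem ⟨le_refl 0, hr2⟩
        filter_upwards [hmem] with t ht
        exact hbound t ht.1 ht.2
      · have hM0 : Tendsto (fun t : ℝ => M * t) (𝓝 (0:ℝ)) (𝓝 (M * 0)) :=
          (continuous_const.mul continuous_id).tendsto 0
        rw [mul_zero] at hM0
        exact hM0.mono_left nhdsWithin_le_nhds
    have hfin := key.add_const (a c)
    rw [zero_add] at hfin
    simpa only [sub_add_cancel] using hfin
  -- composed limit
  have hmap : Tendsto (fun θ : ℝ => θ * s) (𝓝[>] (0:ℝ)) (𝓝[>] (0:ℝ)) := by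
    rw [tendsto_nhdsWithin_iff]
    constructor
    · have hms : Tendsto (fun θ : ℝ => θ * s) (𝓝 0) (𝓝 (0 * s)) :=
        (continuous_id.mul continuous_const).tendsto 0
      rw [zero_mul] at hms
      exact hms.mono_left nhdsWithin_le_nhds
    · filter_upwards [self_mem_nhdsWithin] with θ hθ
      exact mul_pos hθ hs
  have hgts : Tendsto (fun θ : ℝ => g (θ * s)) (𝓝[>] (0:ℝ)) (𝓝 (a c)) := hgt.comp hmap
  have hlim : Tendsto (fun θ : ℝ => 1 - s ^ c * (g (θ * s) / g θ)) (𝓝[>] (0:ℝ))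
      (𝓝 (1 - s ^ c)) := by
    have hdiv : Tendsto (fun θ : ℝ => g (θ * s) / g θ) (𝓝[>] (0:ℝ)) (𝓝 (a c / a c)) :=
      hgts.div hgt hac.ne'
    rw [div_self hac.ne'] at hdiv
    have hmul : Tendsto (fun θ : ℝ => s ^ c * (g (θ * s) / g θ)) (𝓝[>] (0:ℝ))
        (𝓝 (s ^ c * 1)) := hdiv.const_mul (s ^ c)
    rw [mul_one] at hmul
    exact hmul.const_sub 1
  have heq : (fun θ : ℝ =>
        1 - (∑' n : ℕ, a n * (θ * s) ^ n) / (∑' n : ℕ, a n * θ ^ n)) =ᶠ[𝓝[>] (0:ℝ)]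
      (fun θ : ℝ => 1 - s ^ c * (g (θ * s) / g θ)) := by
    have hmem : Ioo (0:ℝ) r ∈ 𝓝[>] (0:ℝ) := Ioo_mem_nhdsGT_of_mem ⟨le_refl 0, hr⟩
    filter_upwards [hmem] with θ hθ
    have hθ0 : 0 < θ := hθ.1
    have hθr : θ < r := hθ.2
    have hθs0 : 0 < θ * s := mul_pos hθ0 hs
    have hθsr : θ * s < r := lt_of_le_of_lt (by nlinarith) hθr
    rw [hfac θ hθ0 hθr, hfac (θ * s) hθs0 hθsr]
    have h1 : θ ^ c ≠ 0 := pow_ne_zero _ hθ0.ne'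
    have h2 : g θ ≠ 0 := (hgpos θ hθ0 hθr).ne'
    rw [mul_pow]
    field_simp
  have hexp : s ^ c = exp (-((c : ℝ) * α * H x)) := by
    rw [hsdef, ← Real.exp_nat_mul]
    congr 1
    ring
  rw [← hexp]
  exact hlim.congr' heq.symm
end

section
/- If N has probability mass function P(N = n) = a_n θ^n / C(θ) for n ≥ 1, and given N = n, X₍₁₎ is the minimum of n i.i.d. random variables each with cdf G(x) = 1 - e^{-αH(x)}, then the marginal cdf of X₍₁₎ is F(x) = 1 - C(θ e^{-αH(x)})/C(θ). -/
set_option maxHeartbeats 1000000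

open Real Set Filter Topology MeasureTheory

/-- Compounding construction: if `P(N = n) = a_n θ^n / C(θ)` for `n ≥ 1` and the joint law
satisfies `P(X ≤ x, N = n) = (a_n θ^n / C(θ)) (1 - e^{-nαH(x)})`, then the marginal cdf of
`X` is `F(x) = 1 - C(θ e^{-αH(x)})/C(θ)`. -/
theorem ewps_compounding {Ω : Type*} [MeasurableSpace Ω]
    (P : Measure Ω) [IsProbabilityMeasure P]
    (N : Ω → ℕ) (X : Ω → ℝ) (hN : Measurable N) (hX : Measurable X)
    (H : ℝ → ℝ) (a : ℕ → ℝ) (α θ : ℝ)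
    (hα : 0 < α) (hθ : 0 < θ) (ha : ∀ n, 0 ≤ a n) (ha0 : a 0 = 0)
    (hHnn : ∀ y > (0:ℝ), 0 ≤ H y)
    (hsum : Summable (fun n : ℕ => a n * θ ^ n))
    (hCpos : 0 < ∑' n : ℕ, a n * θ ^ n)
    (hN1 : ∀ ω, 1 ≤ N ω)
    (hpmf : ∀ n : ℕ, 1 ≤ n →
        P {ω | N ω = n} = ENNReal.ofReal (a n * θ ^ n / (∑' m : ℕ, a m * θ ^ m)))
    (x : ℝ) (hx : 0 < x)
    (hjoint : ∀ n : ℕ, 1 ≤ n →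
        P {ω | X ω ≤ x ∧ N ω = n} =
          ENNReal.ofReal ((a n * θ ^ n / (∑' m : ℕ, a m * θ ^ m)) *
            (1 - exp (-((n : ℝ) * α * H x))))) :
    P {ω | X ω ≤ x} =
      ENNReal.ofReal
        (1 - (∑' n : ℕ, a n * (θ * exp (-α * H x)) ^ n) / (∑' n : ℕ, a n * θ ^ n)) := by
  classical
  set C : ℝ := ∑' n : ℕ, a n * θ ^ n with hC
  set E : ℝ := exp (-α * H x) with hEdef
  have hHx : 0 ≤ H x := hHnn x hx
  have hE0 : 0 < E := exp_pos _
  have hE1 : E ≤ 1 := by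
    rw [hEdef]
    apply exp_le_one_iff.mpr
    nlinarith
  -- exponent rewriting
  have hexp : ∀ n : ℕ, exp (-((n : ℝ) * α * H x)) = E ^ n := by
    intro n
    rw [hEdef, ← Real.exp_nat_mul]
    ring_nf
  -- set decomposition
  have hset : {ω | X ω ≤ x} = ⋃ n : ℕ, {ω | X ω ≤ x ∧ N ω = n + 1} := by
    ext ω
    simp only [Set.mem_setOf_eq, Set.mem_iUnion]
    constructor
    · intro h
      exact ⟨N ω - 1, h, (Nat.succ_pred_eq_of_pos (hN1 ω)).symm⟩
    · rintro ⟨n, h, -⟩; exact h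
  have hmeas : ∀ n : ℕ, MeasurableSet {ω | X ω ≤ x ∧ N ω = n + 1} := by
    intro n
    exact (hX measurableSet_Iic).inter (hN (measurableSet_singleton (n + 1)))
  have hdisj : Pairwise (Function.onFun Disjoint
      (fun n : ℕ => {ω | X ω ≤ x ∧ N ω = n + 1})) := by
    intro i j hij
    refine Set.disjoint_left.mpr ?_
    rintro ω ⟨-, hi⟩ ⟨-, hj⟩
    exact hij (by omega)
  rw [hset, measure_iUnion hdisj hmeas]
  have hterm : ∀ n : ℕ, P {ω | X ω ≤ x ∧ N ω = n + 1} =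
      ENNReal.ofReal ((a (n+1) * θ ^ (n+1) / C) * (1 - E ^ (n+1))) := by
    intro n
    rw [hjoint (n+1) (by omega), hexp]
  simp_rw [hterm]
  -- summability facts
  have hsum1 : Summable (fun n : ℕ => a (n+1) * θ ^ (n+1)) :=
    (summable_nat_add_iff 1).mpr hsum
  have hsumE : Summable (fun n : ℕ => a n * (θ * E) ^ n) := by
    apply Summable.of_nonneg_of_le (fun n => mul_nonneg (ha n) (pow_nonneg (mul_nonneg hθ.le hE0.le) n)) _ hsum
    intro n
    apply mul_le_mul_of_nonneg_left _ (ha n)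
    apply pow_le_pow_left₀ (mul_nonneg hθ.le hE0.le)
    nlinarith
  have hsumE1 : Summable (fun n : ℕ => a (n+1) * (θ * E) ^ (n+1)) :=
    (summable_nat_add_iff 1).mpr hsumE
  have hfeq : ∀ n : ℕ, (a (n+1) * θ ^ (n+1) / C) * (1 - E ^ (n+1)) =
      (a (n+1) * θ ^ (n+1) - a (n+1) * (θ * E) ^ (n+1)) / C := by
    intro n
    rw [mul_pow]
    ring
  have hfsum : Summable (fun n : ℕ =>
      (a (n+1) * θ ^ (n+1) / C) * (1 - E ^ (n+1))) := by
    simp_rw [hfeq]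
    exact (hsum1.sub hsumE1).div_const C
  have hfnn : ∀ n : ℕ, 0 ≤ (a (n+1) * θ ^ (n+1) / C) * (1 - E ^ (n+1)) := by
    intro n
    apply mul_nonneg (div_nonneg (mul_nonneg (ha _) (pow_nonneg hθ.le _)) hCpos.le)
    have : E ^ (n+1) ≤ 1 := pow_le_one₀ (le_of_lt hE0) hE1
    linarith
  rw [← ENNReal.ofReal_tsum_of_nonneg hfnn hfsum]
  congr 1
  have h1 : ∑' n : ℕ, a (n+1) * θ ^ (n+1) = C := by
    have := Summable.tsum_eq_zero_add hsum
    simp [ha0] at this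
    rw [hC, this]
  have h2 : ∑' n : ℕ, a (n+1) * (θ * E) ^ (n+1) = ∑' n : ℕ, a n * (θ * E) ^ n := by
    have := Summable.tsum_eq_zero_add hsumE
    simp [ha0] at this
    rw [this]
  calc ∑' n : ℕ, (a (n+1) * θ ^ (n+1) / C) * (1 - E ^ (n+1))
      = ∑' n : ℕ, (a (n+1) * θ ^ (n+1) - a (n+1) * (θ * E) ^ (n+1)) / C := by
        simp_rw [hfeq]
    _ = (∑' n : ℕ, (a (n+1) * θ ^ (n+1) - a (n+1) * (θ * E) ^ (n+1))) / C := by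
        rw [tsum_div_const]
    _ = ((∑' n : ℕ, a (n+1) * θ ^ (n+1)) - ∑' n : ℕ, a (n+1) * (θ * E) ^ (n+1)) / C := by
        rw [Summable.tsum_sub hsum1 hsumE1]
    _ = (C - ∑' n : ℕ, a n * (θ * E) ^ n) / C := by rw [h1, h2]
    _ = 1 - (∑' n : ℕ, a n * (θ * E) ^ n) / C := by
        field_simp
end

section
/- For the Pareto Poisson distribution and nα > r, the r-th moment is E[X^r] = (α k^r / (e^θ - 1)) · Σ_{n=1}^∞ θ^n / ((n-1)! · (nα - r)). -/
open Real Set Filter Topology MeasureTheory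

/-- For the Pareto Poisson distribution with `nα > r` for all `n ≥ 1` (i.e. `α > r`),
the `r`-th moment is
`E[X^r] = (α k^r/(e^θ - 1)) ∑_{n≥1} θ^n/((n-1)! (nα - r))`. -/
theorem pareto_poisson_moments (k α θ : ℝ) (r : ℕ)
    (hk : 0 < k) (hα : 0 < α) (hθ : 0 < θ) (hra : (r : ℝ) < α) :
    ∫ x in Ici k,
        (x : ℝ) ^ r *
          (θ * α * k ^ α * exp (θ * (k / x) ^ α) / ((exp θ - 1) * x ^ (α + 1)))
      = α * k ^ r / (exp θ - 1) *
          ∑' n : ℕ, θ ^ (n + 1) / ((n.factorial : ℝ) * (((n : ℝ) + 1) * α - r)) := by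
  have hek : 0 < exp θ - 1 := by
    have h1 : (1 : ℝ) < exp θ := by
      rw [show (1 : ℝ) = exp 0 from (Real.exp_zero).symm]
      exact Real.exp_lt_exp.mpr hθ
    linarith
  set p : ℕ → ℝ := fun n => (r : ℝ) - ((n : ℝ) + 1) * α - 1 with hp
  set C : ℕ → ℝ := fun n => α * k ^ (((n : ℝ) + 1) * α) * θ ^ (n + 1) /
      ((exp θ - 1) * n.factorial) with hC
  have ha : ∀ n : ℕ, 0 < ((n : ℝ) + 1) * α - r := by
    intro n
    have h0 : (0 : ℝ) ≤ n := Nat.cast_nonneg n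
    have h1 : α ≤ ((n : ℝ) + 1) * α := le_mul_of_one_le_left hα.le (by linarith)
    linarith
  have hple : ∀ n : ℕ, p n < -1 := by
    intro n
    have := ha n
    simp only [hp]
    linarith
  have hCpos : ∀ n, 0 < C n := by
    intro n
    simp only [hC]
    have := n.factorial_pos
    positivity
  have hFint : ∀ n : ℕ, IntegrableOn (fun x : ℝ => C n * x ^ p n) (Ioi k) := fun n =>
    (integrableOn_Ioi_rpow_of_lt (hple n) hk).const_mul _
  -- value of each integral
  have hval : ∀ n : ℕ, (∫ x in Ioi k, C n * x ^ p n)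
      = (α * k ^ r / (exp θ - 1)) *
        (θ ^ (n + 1) / ((n.factorial : ℝ) * (((n : ℝ) + 1) * α - r))) := by
    intro n
    rw [MeasureTheory.integral_const_mul, integral_Ioi_rpow_of_lt (hple n) hk]
    have h1 : p n + 1 = -(((n : ℝ) + 1) * α - r) := by simp only [hp]; ring
    have h2 : (k : ℝ) ^ r = k ^ (((n : ℝ) + 1) * α) * k ^ (-(((n : ℝ) + 1) * α - r)) := by
      rw [← Real.rpow_add hk, ← Real.rpow_natCast k r]
      congr 1
      ring
    have hfne : ((n.factorial : ℝ)) ≠ 0 := Nat.cast_ne_zero.mpr n.factorial_ne_zero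
    have hane : (((n : ℝ) + 1) * α - (r : ℝ)) ≠ 0 := (ha n).ne'
    have hekne : exp θ - 1 ≠ 0 := hek.ne'
    rw [h1]
    simp only [hC]
    rw [h2]
    generalize (((n : ℝ) + 1) * α - (r : ℝ)) = a at hane ⊢
    generalize k ^ (((n : ℝ) + 1) * α) = K
    generalize k ^ (-a) = b
    field_simp
  -- pointwise series expansion of the integrand
  have hpt : ∀ x ∈ Ioi k,
      (x : ℝ) ^ r * (θ * α * k ^ α * exp (θ * (k / x) ^ α) / ((exp θ - 1) * x ^ (α + 1)))
        = ∑' n : ℕ, C n * x ^ p n := by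
    intro x hx
    have hx0 : 0 < x := hk.trans hx
    have hexp : exp (θ * (k / x) ^ α) = ∑' n : ℕ, (θ * (k / x) ^ α) ^ n / n.factorial := by
      rw [Real.exp_eq_exp_ℝ, NormedSpace.exp_eq_tsum_div]
    rw [hexp, ← tsum_mul_left, ← tsum_div_const, ← tsum_mul_left]
    refine tsum_congr fun n => ?_
    have e1 : (θ * (k / x) ^ α) ^ n
        = θ ^ n * (k ^ (α * (n : ℝ)) / x ^ (α * (n : ℝ))) := by
      rw [mul_pow, ← Real.rpow_natCast ((k / x) ^ α) n,
        ← Real.rpow_mul (by positivity : (0 : ℝ) ≤ k / x),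
        Real.div_rpow hk.le hx0.le]
    have e2 : x ^ p n = x ^ (r : ℝ) / (x ^ (α + 1) * x ^ (α * (n : ℝ))) := by
      rw [← Real.rpow_add hx0, ← Real.rpow_sub hx0]
      congr 1
      simp only [hp]
      ring
    have e3 : k ^ (((n : ℝ) + 1) * α) = k ^ α * k ^ (α * (n : ℝ)) := by
      rw [← Real.rpow_add hk]
      congr 1
      ring
    have hfne : ((n.factorial : ℝ)) ≠ 0 := Nat.cast_ne_zero.mpr n.factorial_ne_zero
    have hx1 : x ^ (α + 1) ≠ 0 := (Real.rpow_pos_of_pos hx0 _).ne'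
    have hx2 : x ^ (α * (n : ℝ)) ≠ 0 := (Real.rpow_pos_of_pos hx0 _).ne'
    rw [e1]
    simp only [hC]
    rw [e2, e3, ← Real.rpow_natCast x r]
    field_simp
    ring
  -- summability of the integrals of norms
  have hnorm : ∀ n : ℕ, (∫ x in Ioi k, ‖C n * x ^ p n‖) = ∫ x in Ioi k, C n * x ^ p n := by
    intro n
    refine setIntegral_congr_fun measurableSet_Ioi fun x hx => ?_
    have hx0 : 0 < x := hk.trans hx
    exact Real.norm_of_nonneg (mul_nonneg (hCpos n).le (Real.rpow_nonneg hx0.le _))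
  have hsum : Summable fun n : ℕ => ∫ x in Ioi k, ‖C n * x ^ p n‖ := by
    have heq : (fun n : ℕ => ∫ x in Ioi k, ‖C n * x ^ p n‖)
        = fun n : ℕ => (α * k ^ r / (exp θ - 1)) *
            (θ ^ (n + 1) / ((n.factorial : ℝ) * (((n : ℝ) + 1) * α - r))) :=
      funext fun n => (hnorm n).trans (hval n)
    rw [heq]
    apply Summable.mul_left
    have hbig : Summable fun n : ℕ => (θ / (α - r)) * (θ ^ n / n.factorial) :=
      (Real.summable_pow_div_factorial θ).mul_left _
    refine Summable.of_nonneg_of_le (fun n => ?_) (fun n => ?_) hbig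
    · have := ha n
      have := n.factorial_pos
      positivity
    · have hfpos : (0 : ℝ) < n.factorial := by exact_mod_cast n.factorial_pos
      have h0 : (0 : ℝ) ≤ n := Nat.cast_nonneg n
      have h2 : α ≤ ((n : ℝ) + 1) * α := le_mul_of_one_le_left hα.le (by linarith)
      have h1 : θ ^ (n + 1) / ((n.factorial : ℝ) * (((n : ℝ) + 1) * α - r))
          ≤ θ ^ (n + 1) / ((n.factorial : ℝ) * (α - r)) :=
        div_le_div_of_nonneg_left (pow_nonneg hθ.le _)
          (mul_pos hfpos (by linarith))
          (mul_le_mul_of_nonneg_left (by linarith) hfpos.le)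
      have h3 : θ ^ (n + 1) / ((n.factorial : ℝ) * (α - r))
          = (θ / (α - r)) * (θ ^ n / n.factorial) := by
        field_simp
        ring
      linarith [h1, h3.le]
  -- assemble
  rw [MeasureTheory.integral_Ici_eq_integral_Ioi,
    setIntegral_congr_fun measurableSet_Ioi hpt,
    ← MeasureTheory.integral_tsum_of_summable_integral_norm hFint hsum]
  have : (∑' n : ℕ, ∫ x in Ioi k, C n * x ^ p n)
      = ∑' n : ℕ, (α * k ^ r / (exp θ - 1)) *
          (θ ^ (n + 1) / ((n.factorial : ℝ) * (((n : ℝ) + 1) * α - r))) :=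
    tsum_congr hval
  rw [this, tsum_mul_left]
end

section
/- For X with Pareto Poisson density, the mean E[X] = (αk/(e^θ - 1)) Σ_{n=1}^∞ θ^n / ((n-1)!(nα - 1)), valid when α > 1. -/
open Real Set Filter Topology MeasureTheory

/-- For `X` with the Pareto Poisson density and `α > 1`, the mean is
`E[X] = (αk/(e^θ - 1)) ∑_{n≥1} θ^n/((n-1)!(nα - 1))`. -/
theorem pareto_poisson_mean (k α θ : ℝ)
    (hk : 0 < k) (hα : 1 < α) (hθ : 0 < θ) :
    ∫ x in Ici k,
        x * (θ * α * k ^ α * exp (θ * (k / x) ^ α) / ((exp θ - 1) * x ^ (α + 1)))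
      = α * k / (exp θ - 1) *
          ∑' n : ℕ, θ ^ (n + 1) / ((n.factorial : ℝ) * (((n : ℝ) + 1) * α - 1)) := by
  have hE : (0:ℝ) < exp θ - 1 := by
    have := Real.add_one_lt_exp hθ.ne'
    linarith
  set F : ℕ → ℝ → ℝ := fun n x =>
    (α * θ ^ (n+1) * k ^ (((n:ℝ)+1) * α) / ((n.factorial : ℝ) * (exp θ - 1)))
      * x ^ (-(((n:ℝ)+1) * α)) with hF
  have hexp_lt : ∀ n : ℕ, -(((n:ℝ)+1) * α) < -1 := by
    intro n
    have h1 : (0:ℝ) ≤ (n:ℝ) := n.cast_nonneg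
    nlinarith [h1, hα]
  have hden_pos : ∀ n : ℕ, (0:ℝ) < ((n:ℝ)+1) * α - 1 := by
    intro n
    have := hexp_lt n
    linarith
  -- integrability
  have hint : ∀ n, IntegrableOn (F n) (Ioi k) := by
    intro n
    exact (integrableOn_Ioi_rpow_of_lt (hexp_lt n) hk).const_mul _
  -- value of each integral
  have hval : ∀ n, ∫ x in Ioi k, F n x
      = α * k / (exp θ - 1) * (θ ^ (n+1) / ((n.factorial : ℝ) * (((n:ℝ)+1) * α - 1))) := by
    intro n
    rw [hF]
    simp only
    have hkk : k ^ (((n:ℝ)+1) * α) * k ^ (-(((n:ℝ)+1) * α) + 1) = k := by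
      rw [← Real.rpow_add hk]
      ring_nf
      exact Real.rpow_one k
    have hfac : ((n.factorial : ℝ)) ≠ 0 := Nat.cast_ne_zero.2 n.factorial_ne_zero
    have hD : (((n:ℝ)+1) * α - 1) ≠ 0 := (hden_pos n).ne'
    rw [MeasureTheory.integral_const_mul, integral_Ioi_rpow_of_lt (hexp_lt n) hk,
      div_mul_div_comm, div_mul_div_comm,
      div_eq_div_iff
        (mul_ne_zero (mul_ne_zero hfac hE.ne') (by linarith [hexp_lt n]))
        (mul_ne_zero hE.ne' (mul_ne_zero hfac hD))]
    linear_combination (-(α * θ^(n+1)) * ((rexp θ - 1) * ((n.factorial:ℝ) * (((n:ℝ)+1)*α - 1)))) * hkk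
  -- norms of integrals
  have hnormval : ∀ n, (∫ x in Ioi k, ‖F n x‖)
      = α * k / (exp θ - 1) * (θ ^ (n+1) / ((n.factorial : ℝ) * (((n:ℝ)+1) * α - 1))) := by
    intro n
    rw [← hval n]
    refine setIntegral_congr_fun measurableSet_Ioi fun x hx => ?_
    have hx0 : (0:ℝ) < x := hk.trans hx
    have hFpos : 0 ≤ F n x := by
      rw [hF]
      exact mul_nonneg (by positivity) (Real.rpow_nonneg hx0.le _)
    exact norm_of_nonneg hFpos
  -- summability of norms
  have hsum : Summable fun n : ℕ => ∫ x in Ioi k, ‖F n x‖ := by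
    simp only [hnormval]
    apply Summable.mul_left
    have hbase : Summable fun n : ℕ => θ / (α - 1) * (θ ^ n / (n.factorial : ℝ)) :=
      (Real.summable_pow_div_factorial θ).mul_left _
    refine Summable.of_nonneg_of_le (fun n => by have := hden_pos n; positivity) (fun n => ?_) hbase
    have hfac : (0:ℝ) < (n.factorial : ℝ) := by positivity
    have heq : θ / (α - 1) * (θ ^ n / (n.factorial : ℝ))
        = θ ^ (n+1) / ((n.factorial : ℝ) * (α - 1)) := by
      rw [pow_succ]; field_simp
    rw [heq]
    have hα1 : (0:ℝ) < α - 1 := by linarith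
    gcongr
    nlinarith [(n.cast_nonneg : (0:ℝ) ≤ n), hfac]
  -- swap sum and integral
  have hswap := MeasureTheory.integral_tsum_of_summable_integral_norm
      (μ := volume.restrict (Ioi k)) (F := F) (fun n => hint n) hsum
  -- exp as a series
  have hexp_series : ∀ y : ℝ, Real.exp y = ∑' n : ℕ, y ^ n / (n.factorial : ℝ) := by
    intro y
    rw [Real.exp_eq_exp_ℝ, NormedSpace.exp_eq_tsum_div]
  -- pointwise identity
  have hpt : ∀ x ∈ Ioi k,
      x * (θ * α * k ^ α * exp (θ * (k / x) ^ α) / ((exp θ - 1) * x ^ (α + 1)))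
        = ∑' n, F n x := by
    intro x hx
    have hx0 : (0:ℝ) < x := hk.trans hx
    rw [hexp_series]
    have hrw : x * (θ * α * k ^ α * (∑' n : ℕ, (θ * (k/x)^α) ^ n / (n.factorial : ℝ))
          / ((exp θ - 1) * x ^ (α+1)))
        = ∑' n : ℕ, (x * θ * α * k ^ α / ((exp θ - 1) * x ^ (α+1)))
            * ((θ * (k/x)^α) ^ n / (n.factorial : ℝ)) := by
      rw [tsum_mul_left]; ring
    rw [hrw]
    refine tsum_congr fun n => ?_
    have h1 : ((k / x) ^ α) ^ n = k ^ (α * (n:ℝ)) / x ^ (α * (n:ℝ)) := by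
      rw [← Real.rpow_natCast ((k/x) ^ α) n, ← Real.rpow_mul (div_nonneg hk.le hx0.le),
        Real.div_rpow hk.le hx0.le]
    have h2 : k ^ α * k ^ (α * (n:ℝ)) = k ^ (((n:ℝ)+1) * α) := by
      rw [← Real.rpow_add hk]; ring_nf
    have h3 : x ^ (-(((n:ℝ)+1) * α)) = x / (x ^ (α+1) * x ^ (α * (n:ℝ))) := by
      rw [eq_div_iff (by positivity)]
      rw [← Real.rpow_add hx0, ← Real.rpow_add hx0]
      ring_nf
      exact Real.rpow_one x
    have hfac : ((n.factorial : ℝ)) ≠ 0 := Nat.cast_ne_zero.2 n.factorial_ne_zero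
    rw [hF]
    simp only [mul_pow, h1, h3, ← h2]
    have hx1 : (0:ℝ) < x ^ (α + 1) := Real.rpow_pos_of_pos hx0 _
    have hx2 : (0:ℝ) < x ^ (α * (n:ℝ)) := Real.rpow_pos_of_pos hx0 _
    field_simp
    ring
  -- assemble
  rw [MeasureTheory.integral_Ici_eq_integral_Ioi,
    MeasureTheory.setIntegral_congr_fun measurableSet_Ioi hpt, ← hswap,
    tsum_congr hval, tsum_mul_left]
end

section
/- The conditional distribution of N given X₍₁₎ = x in the EWPS compounding construction has probability mass function g(z|x) = z a_z θ^{z-1} e^{-α(z-1)H(x)} / C'(θ e^{-αH(x)}), and its expectation is E[N | X₍₁₎ = x] = 1 + θ e^{-αH(x)} C''(θ e^{-αH(x)})/C'(θ e^{-αH(x)}). -/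
open Real Set Filter Topology

/-- The conditional distribution of `N` given `X₍₁₎ = x` in the EWPS compounding
construction has pmf `g(z|x) = z a_z θ^{z-1} e^{-α(z-1)H(x)} / C'(θe^{-αH(x)})`
(the ratio of the joint density to the EWPS marginal), and its expectation is
`E[N | X₍₁₎ = x] = 1 + θ e^{-αH(x)} C''(θe^{-αH(x)})/C'(θe^{-αH(x)})`. -/
theorem ewps_conditional_N (H h : ℝ → ℝ) (a : ℕ → ℝ) (α θ : ℝ)
    (hα : 0 < α) (hθ : 0 < θ) (ha : ∀ n, 0 ≤ a n)
    (x : ℝ) (hx : 0 < x) (hhx : 0 < h x) (hHx : 0 ≤ H x)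
    (hCθ : 0 < ∑' n : ℕ, a n * θ ^ n)
    (hsumCp : Summable (fun n : ℕ => (n : ℝ) * a n * (θ * exp (-α * H x)) ^ (n - 1)))
    (hCp : 0 < ∑' n : ℕ, (n : ℝ) * a n * (θ * exp (-α * H x)) ^ (n - 1))
    (hsumCpp : Summable (fun n : ℕ =>
        (n : ℝ) * ((n : ℝ) - 1) * a n * (θ * exp (-α * H x)) ^ (n - 2))) :
    (∀ z : ℕ, 1 ≤ z →
      (α * z * a z * θ ^ z * h x * exp (-(α * z * H x)) / (∑' n : ℕ, a n * θ ^ n)) /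
        (θ * α * h x * exp (-α * H x) *
          (∑' n : ℕ, (n : ℝ) * a n * (θ * exp (-α * H x)) ^ (n - 1)) /
          (∑' n : ℕ, a n * θ ^ n))
      = (z : ℝ) * a z * θ ^ (z - 1) * exp (-(α * ((z : ℝ) - 1) * H x)) /
          (∑' n : ℕ, (n : ℝ) * a n * (θ * exp (-α * H x)) ^ (n - 1))) ∧
    (∑' z : ℕ, (z : ℝ) *
        ((z : ℝ) * a z * θ ^ (z - 1) * exp (-(α * ((z : ℝ) - 1) * H x)) /
          (∑' n : ℕ, (n : ℝ) * a n * (θ * exp (-α * H x)) ^ (n - 1)))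
      = 1 + θ * exp (-α * H x) *
          (∑' n : ℕ, (n : ℝ) * ((n : ℝ) - 1) * a n * (θ * exp (-α * H x)) ^ (n - 2)) /
          (∑' n : ℕ, (n : ℝ) * a n * (θ * exp (-α * H x)) ^ (n - 1))) := by
  set y := θ * exp (-α * H x) with hy
  set C := ∑' n : ℕ, a n * θ ^ n with hC
  set Cp := ∑' n : ℕ, (n : ℝ) * a n * y ^ (n - 1) with hCpdef
  set Cpp := ∑' n : ℕ, (n : ℝ) * ((n : ℝ) - 1) * a n * y ^ (n - 2) with hCppdef
  have hCne : C ≠ 0 := ne_of_gt hCθ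
  have hCpne : Cp ≠ 0 := ne_of_gt hCp
  have hαne : α ≠ 0 := ne_of_gt hα
  have hθne : θ ≠ 0 := ne_of_gt hθ
  have hhne : h x ≠ 0 := ne_of_gt hhx
  have he1 : exp (-α * H x) ≠ 0 := exp_ne_zero _
  constructor
  · intro z hz
    obtain ⟨m, rfl⟩ : ∃ m, z = m + 1 := ⟨z - 1, (Nat.succ_pred_eq_of_pos hz).symm⟩
    have h1 : ((m + 1 : ℕ) : ℝ) = (m : ℝ) + 1 := by push_cast; ring
    have h2 : θ ^ (m + 1) = θ * θ ^ m := by ring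
    have h3 : exp (-(α * ((m + 1 : ℕ) : ℝ) * H x)) =
        exp (-α * H x) * exp (-(α * (((m + 1 : ℕ) : ℝ) - 1) * H x)) := by
      rw [← Real.exp_add]; push_cast; ring_nf
    simp only [Nat.add_sub_cancel]
    rw [h2, h3]
    push_cast
    field_simp
  · have key : ∀ z : ℕ, (z : ℝ) *
        ((z : ℝ) * a z * θ ^ (z - 1) * exp (-(α * ((z : ℝ) - 1) * H x)) / Cp)
        = (y * ((z : ℝ) * ((z : ℝ) - 1) * a z * y ^ (z - 2))
            + (z : ℝ) * a z * y ^ (z - 1)) / Cp := by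
      intro z
      match z with
      | 0 => simp
      | 1 => simp [hy]
      | (m + 2) =>
        have h4 : (((m + 2 : ℕ) : ℝ) - 1) = ((m + 1 : ℕ) : ℝ) := by push_cast; ring
        have h3 : exp (-(α * (((m + 2 : ℕ) : ℝ) - 1) * H x)) = exp (-α * H x) ^ (m + 1) := by
          rw [h4, ← Real.exp_nat_mul]; ring_nf
        rw [h3, hy]
        simp only [show m + 2 - 1 = m + 1 from rfl, show m + 2 - 2 = m from rfl]
        push_cast
        field_simp
        ring
    rw [tsum_congr key]
    have hs1 : Summable (fun z : ℕ => y * ((z : ℝ) * ((z : ℝ) - 1) * a z * y ^ (z - 2))) :=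
      hsumCpp.mul_left y
    rw [tsum_div_const, Summable.tsum_add hs1 hsumCp, tsum_mul_left]
    rw [← hCppdef, ← hCpdef]
    field_simp
    ring
end
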